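/- Let G and H be finite simple graphs with vertex sets V and W and adjacency matrices A and B. Then 𝟙_V^T·A^ℓ·𝟙_V = 𝟙_W^T·B^ℓ·𝟙_W holds for every ℓ ∈ ℕ (equivalently, G and H have the same number of walks of length ℓ for every ℓ, i.e. hom(P_ℓ,G) = hom(P_ℓ,H) for every path P_ℓ) if and only if there exists a real matrix X ∈ ℝ^{V×W} satisfying AX = XB, X·𝟙_W = 𝟙_V, and 𝟙_V^T·X = 𝟙_W^T. -/

import Mathlib

open Matrix

section helpers
variable {α : Type*} [Fintype α] [DecidableEq α]

noncomputable def powCols (A : Matrix α α ℝ) (n : ℕ) : Matrix α (Fin (n+1)) ℝ :=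
  Matrix.of fun v i => ((A ^ (i:ℕ)) *ᵥ (fun _ => (1:ℝ))) v

lemma sum_mulVec' {β : Type*} (s : Finset β) (f : β → Matrix α α ℝ) (x : α → ℝ) :
    (∑ i ∈ s, f i) *ᵥ x = ∑ i ∈ s, f i *ᵥ x := by
  funext v
  simp [Matrix.mulVec, dotProduct, Matrix.sum_apply, Finset.sum_apply, Finset.sum_mul]
  exact Finset.sum_comm

lemma powCols_mulVec_single (A : Matrix α α ℝ) (n : ℕ) (i : Fin (n+1)) :
    powCols A n *ᵥ Pi.single i 1 = (A ^ (i:ℕ)) *ᵥ (fun _ => (1:ℝ)) := by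
  rw [Matrix.mulVec_single]
  funext v
  simp [powCols]

lemma powCols_gram (A : Matrix α α ℝ) (hA : Aᵀ = A) (n : ℕ) (i j : Fin (n+1)) :
    ((powCols A n)ᵀ * powCols A n) i j
      = (fun _ => (1:ℝ)) ⬝ᵥ ((A ^ ((i:ℕ)+(j:ℕ))) *ᵥ (fun _ => (1:ℝ))) := by
  have h1 : (fun _ => (1:ℝ)) ⬝ᵥ ((A ^ ((i:ℕ)+(j:ℕ))) *ᵥ (fun _ => (1:ℝ)))
      = ((A ^ (i:ℕ)) *ᵥ (fun _ => (1:ℝ))) ⬝ᵥ ((A ^ (j:ℕ)) *ᵥ (fun _ => (1:ℝ))) := by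
    rw [pow_add, ← Matrix.mulVec_mulVec, Matrix.dotProduct_mulVec]
    congr 1
    rw [← Matrix.mulVec_transpose, Matrix.transpose_pow, hA]
  rw [h1, Matrix.mul_apply]
  simp [powCols, dotProduct]

lemma powCols_transpose_mulVec_one (A : Matrix α α ℝ) (n : ℕ) :
    (powCols A n)ᵀ *ᵥ (fun _ => (1:ℝ))
      = ((powCols A n)ᵀ * powCols A n) *ᵥ Pi.single 0 1 := by
  rw [← Matrix.mulVec_mulVec, powCols_mulVec_single]
  simp

lemma powCols_shift (A : Matrix α α ℝ) (n : ℕ) (c : Fin (n+1) → ℝ)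
    (hc : c (Fin.last n) = 0) :
    powCols A n *ᵥ (fun i => if hi : 0 < (i:ℕ) then c ⟨(i:ℕ)-1, by omega⟩ else 0)
      = (A * powCols A n) *ᵥ c := by
  funext v
  have hAP : ∀ i : Fin (n+1), (A * powCols A n) v i = ((A ^ ((i:ℕ)+1)) *ᵥ (fun _ => (1:ℝ))) v := by
    intro i
    have : (A * powCols A n) v i = (A *ᵥ ((A ^ (i:ℕ)) *ᵥ (fun _ => (1:ℝ)))) v := by
      simp [Matrix.mul_apply, Matrix.mulVec, dotProduct, powCols]
    rw [this, Matrix.mulVec_mulVec, ← pow_succ']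
  simp only [Matrix.mulVec, dotProduct]
  rw [Fin.sum_univ_succ, Fin.sum_univ_castSucc]
  simp only [hAP, hc, mul_zero, add_zero]
  simp only [Fin.val_zero, lt_irrefl, dif_neg, not_lt_zero', mul_zero, zero_add, Fin.val_succ,
    Nat.add_sub_cancel, Nat.zero_lt_succ, dif_pos, Fin.coe_castSucc]
  refine Eq.trans (add_eq_right.mpr ?_) ?_
  · exact mul_eq_zero_of_right _ (dif_neg (Nat.lt_irrefl 0))
  refine Finset.sum_congr rfl fun x _ => ?_
  have h1 : powCols A n v x.succ = (A ^ ((x:ℕ)+1) *ᵥ fun _ => (1:ℝ)) v := by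
    simp [powCols]
  have h2 : (⟨(x:ℕ), by omega⟩ : Fin (n+1)) = x.castSucc := Fin.ext rfl
  rw [h1, h2]

lemma powCols_charpoly (A : Matrix α α ℝ) (n : ℕ) (hn : n = Fintype.card α) :
    ∃ c : Fin (n + 1) → ℝ, c (Fin.last n) = 0 ∧
      powCols A n *ᵥ c = (A ^ n) *ᵥ (fun _ => (1:ℝ)) := by
  subst hn
  set n := Fintype.card α with hn
  set p := A.charpoly with hp
  have hdeg : p.natDegree = n := Matrix.charpoly_natDegree_eq_dim A
  have h0 := Polynomial.aeval_eq_sum_range (p := p) A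
  rw [Matrix.aeval_self_charpoly, hdeg] at h0
  have hcoe : p.coeff n = 1 := by
    have := (Matrix.charpoly_monic A).coeff_natDegree
    rwa [hdeg] at this
  rw [Finset.sum_range_succ, hcoe, one_smul] at h0
  have hAn : A ^ n = ∑ i ∈ Finset.range n, (-(p.coeff i)) • A ^ i := by
    have h1 : A ^ n = -∑ i ∈ Finset.range n, p.coeff i • A ^ i :=
      eq_neg_of_add_eq_zero_right h0.symm
    rw [h1, ← Finset.sum_neg_distrib]
    simp [neg_smul]
  refine ⟨fun i => if (i:ℕ) < n then -(p.coeff i) else 0, by simp, ?_⟩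
  funext v
  have lhs : (powCols A n *ᵥ fun i => if (i:ℕ) < n then -(p.coeff i) else 0) v
      = ∑ k ∈ Finset.range (n+1), (A ^ k *ᵥ fun _ => (1:ℝ)) v * (if k < n then -(p.coeff k) else 0) := by
    rw [show (powCols A n *ᵥ fun i => if (i:ℕ) < n then -(p.coeff i) else 0) v
        = ∑ x : Fin (n+1), (A ^ (x:ℕ) *ᵥ fun _ => (1:ℝ)) v * (if (x:ℕ) < n then -(p.coeff x) else 0) from rfl]
    exact Fin.sum_univ_eq_sum_range (fun k => (A ^ k *ᵥ fun _ => (1:ℝ)) v * (if k < n then -(p.coeff k) else 0)) (n+1)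
  rw [lhs, Finset.sum_range_succ, if_neg (lt_irrefl n), mul_zero, add_zero]
  rw [hAn, sum_mulVec']
  simp only [Finset.sum_apply, Matrix.smul_mulVec, Pi.smul_apply, smul_eq_mul]
  refine Finset.sum_congr rfl fun k hk => ?_
  rw [if_pos (Finset.mem_range.mp hk), mul_comm]

lemma exists_genInv {ι : Type*} [Fintype ι] [DecidableEq ι] (M : Matrix ι ι ℝ) :
    ∃ N : Matrix ι ι ℝ, M * N * M = M := by
  set f := Matrix.toLin' M with hf
  obtain ⟨q, hq⟩ := (LinearMap.range f).exists_isCompl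
  obtain ⟨r, hr⟩ := f.rangeRestrict.exists_rightInverse_of_surjective
    (LinearMap.range_rangeRestrict f)
  set g : (ι → ℝ) →ₗ[ℝ] (ι → ℝ) :=
    r ∘ₗ ((LinearMap.range f).linearProjOfIsCompl q hq) with hg
  refine ⟨LinearMap.toMatrix' g, ?_⟩
  apply Matrix.toLin'.injective
  rw [Matrix.toLin'_mul, Matrix.toLin'_mul, Matrix.toLin'_toMatrix']
  refine LinearMap.ext fun x => ?_
  simp only [LinearMap.comp_apply, ← hf]
  have h1 : ((LinearMap.range f).linearProjOfIsCompl q hq) (f x) = ⟨f x, LinearMap.mem_range_self f x⟩ :=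
    Submodule.linearProjOfIsCompl_apply_left hq ⟨f x, LinearMap.mem_range_self f x⟩
  rw [hg]
  simp only [LinearMap.comp_apply, h1]
  have h2 : f.rangeRestrict (r ⟨f x, LinearMap.mem_range_self f x⟩) = ⟨f x, LinearMap.mem_range_self f x⟩ := by
    rw [← LinearMap.comp_apply, hr]; rfl
  have h3 : f (r ⟨f x, LinearMap.mem_range_self f x⟩) = f x := congrArg Subtype.val h2
  rw [h3]

lemma exists_symm_genInv {ι : Type*} [Fintype ι] [DecidableEq ι] (M : Matrix ι ι ℝ)
    (hM : Mᵀ = M) : ∃ N : Matrix ι ι ℝ, Nᵀ = N ∧ M * N * M = M := by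
  obtain ⟨N₀, hN₀⟩ := exists_genInv M
  have h4 : M * N₀ᵀ * M = M := by
    have h5 : (M * N₀ * M)ᵀ = M * N₀ᵀ * M := by
      rw [Matrix.transpose_mul, Matrix.transpose_mul, hM, ← Matrix.mul_assoc]
    rw [← h5, hN₀, hM]
  refine ⟨(1/2 : ℝ) • (N₀ + N₀ᵀ), ?_, ?_⟩
  · rw [Matrix.transpose_smul, Matrix.transpose_add, Matrix.transpose_transpose, add_comm]
  · rw [Matrix.mul_smul, Matrix.smul_mul, Matrix.mul_add, Matrix.add_mul, hN₀, h4]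
    rw [smul_add, ← add_smul]
    norm_num

lemma eq_zero_of_trace_transpose_mul_self {β κ : Type*} [Fintype β] [Fintype κ]
    (Z : Matrix β κ ℝ) (h : Matrix.trace (Zᵀ * Z) = 0) : Z = 0 := by
  have hsum : ∑ j, ∑ v, Z v j ^ 2 = 0 := by
    simpa [Matrix.trace, Matrix.mul_apply, Matrix.diag, sq] using h
  ext v j
  have h1 := (Finset.sum_eq_zero_iff_of_nonneg
    (fun j _ => Finset.sum_nonneg fun v _ => sq_nonneg (Z v j))).mp hsum j (Finset.mem_univ j)
  have h2 := (Finset.sum_eq_zero_iff_of_nonneg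
    (fun v _ => sq_nonneg (Z v j))).mp h1 v (Finset.mem_univ v)
  have := pow_eq_zero_iff (n := 2) (by norm_num) |>.mp h2
  simpa using this

end helpers

theorem stmt2 {V W : Type*} [Fintype V] [Fintype W] [DecidableEq V] [DecidableEq W]
    (G : SimpleGraph V) (H : SimpleGraph W)
    [DecidableRel G.Adj] [DecidableRel H.Adj] :
    (∀ ℓ : ℕ,
        (fun _ => (1 : ℝ)) ⬝ᵥ ((G.adjMatrix ℝ ^ ℓ) *ᵥ (fun _ => 1)) =
        (fun _ => (1 : ℝ)) ⬝ᵥ ((H.adjMatrix ℝ ^ ℓ) *ᵥ (fun _ => 1))) ↔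
    (∃ X : Matrix V W ℝ,
      G.adjMatrix ℝ * X = X * H.adjMatrix ℝ ∧
      X *ᵥ (fun _ => 1) = (fun _ => 1) ∧
      (fun _ => (1 : ℝ)) ᵥ* X = (fun _ => 1)) := by
  set A := G.adjMatrix ℝ with hA
  set B := H.adjMatrix ℝ with hB
  have hAT : Aᵀ = A := G.transpose_adjMatrix
  have hBT : Bᵀ = B := H.transpose_adjMatrix
  constructor
  · intro h
    set n := Fintype.card V with hn
    set U := powCols A n with hU
    set Wm := powCols B n with hWm
    set M := Uᵀ * U with hM
    have hMW : M = Wmᵀ * Wm := by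
      ext i j
      rw [hM, hU, hWm, powCols_gram A hAT, powCols_gram B hBT, h]
    have hMT : Mᵀ = M := by
      rw [hM, Matrix.transpose_mul, Matrix.transpose_transpose]
    have hkerU : ∀ x, M *ᵥ x = 0 → U *ᵥ x = 0 := by
      intro x hx
      rw [hM, ← Matrix.mulVec_mulVec] at hx
      have h2 : (U *ᵥ x) ⬝ᵥ (U *ᵥ x) = 0 := by
        have h3 : x ⬝ᵥ (Uᵀ *ᵥ (U *ᵥ x)) = 0 := by rw [hx, dotProduct_zero]
        rwa [Matrix.dotProduct_mulVec, Matrix.vecMul_transpose] at h3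
      exact dotProduct_self_eq_zero.mp h2
    have hkerW : ∀ x, M *ᵥ x = 0 → Wm *ᵥ x = 0 := by
      intro x hx
      rw [hMW, ← Matrix.mulVec_mulVec] at hx
      have h2 : (Wm *ᵥ x) ⬝ᵥ (Wm *ᵥ x) = 0 := by
        have h3 : x ⬝ᵥ (Wmᵀ *ᵥ (Wm *ᵥ x)) = 0 := by rw [hx, dotProduct_zero]
        rwa [Matrix.dotProduct_mulVec, Matrix.vecMul_transpose] at h3
      exact dotProduct_self_eq_zero.mp h2
    have hUC : ∀ C : Matrix (Fin (n+1)) (Fin (n+1)) ℝ, M * C = 0 → U * C = 0 := by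
      intro C hC
      funext v j
      have hcol : M *ᵥ (fun i => C i j) = 0 := by
        funext i
        exact congrFun (congrFun hC i) j
      exact congrFun (hkerU _ hcol) v
    have hWC : ∀ C : Matrix (Fin (n+1)) (Fin (n+1)) ℝ, M * C = 0 → Wm * C = 0 := by
      intro C hC
      funext w j
      have hcol : M *ᵥ (fun i => C i j) = 0 := by
        funext i
        exact congrFun (congrFun hC i) j
      exact congrFun (hkerW _ hcol) w
    obtain ⟨N, hNT, hMNM⟩ := exists_symm_genInv M hMT
    have F1 : U * (N * M) = U := by
      have h5 : M * (N * M - 1) = 0 := by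
        rw [Matrix.mul_sub, Matrix.mul_one, ← Matrix.mul_assoc, hMNM, sub_self]
      have h6 := hUC _ h5
      rw [Matrix.mul_sub, Matrix.mul_one, sub_eq_zero] at h6
      exact h6
    have F2 : Wm * (N * M) = Wm := by
      have h5 : M * (N * M - 1) = 0 := by
        rw [Matrix.mul_sub, Matrix.mul_one, ← Matrix.mul_assoc, hMNM, sub_self]
      have h6 := hWC _ h5
      rw [Matrix.mul_sub, Matrix.mul_one, sub_eq_zero] at h6
      exact h6
    obtain ⟨c, hclast, hUc⟩ := powCols_charpoly A n hn
    have hUc' : U *ᵥ c = (A ^ n) *ᵥ (fun _ => (1:ℝ)) := by rw [hU]; exact hUc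
    have hWc : Wm *ᵥ c = (B ^ n) *ᵥ (fun _ => (1:ℝ)) := by
      have hUd : U *ᵥ (c - Pi.single (Fin.last n) 1) = 0 := by
        rw [Matrix.mulVec_sub, hU, powCols_mulVec_single, Fin.val_last]
        rw [← hU, hUc', sub_self]
      have hMd : M *ᵥ (c - Pi.single (Fin.last n) 1) = 0 := by
        rw [hM, ← Matrix.mulVec_mulVec, hUd, Matrix.mulVec_zero]
      have h7 := hkerW _ hMd
      rw [Matrix.mulVec_sub, sub_eq_zero] at h7
      rw [h7, hWm, powCols_mulVec_single, Fin.val_last]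
    have hcols : ∀ j : Fin (n+1), ∃ s : Fin (n+1) → ℝ,
        U *ᵥ s = (A ^ ((j:ℕ)+1)) *ᵥ (fun _ => (1:ℝ)) ∧
        Wm *ᵥ s = (B ^ ((j:ℕ)+1)) *ᵥ (fun _ => (1:ℝ)) := by
      intro j
      rcases lt_or_ge (j:ℕ) n with hj | hj
      · refine ⟨Pi.single ⟨(j:ℕ)+1, by omega⟩ 1, ?_, ?_⟩
        · rw [hU, powCols_mulVec_single]
        · rw [hWm, powCols_mulVec_single]
      · have hjn : (j:ℕ) = n := by omega
        refine ⟨fun i => if hi : 0 < (i:ℕ) then c ⟨(i:ℕ)-1, by omega⟩ else 0, ?_, ?_⟩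
        · rw [hU, powCols_shift A n c hclast, ← Matrix.mulVec_mulVec, ← hU, hUc',
            Matrix.mulVec_mulVec, ← pow_succ', hjn]
        · rw [hWm, powCols_shift B n c hclast, ← Matrix.mulVec_mulVec, ← hWm, hWc,
            Matrix.mulVec_mulVec, ← pow_succ', hjn]
    choose s hs1 hs2 using hcols
    set S : Matrix (Fin (n+1)) (Fin (n+1)) ℝ := Matrix.of (fun i j => s j i) with hS
    have hAU : A * U = U * S := by
      funext v j
      have e1 : (A * U) v j = ((A ^ ((j:ℕ)+1)) *ᵥ (fun _ => (1:ℝ))) v := by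
        have e0 : (A * U) v j = (A *ᵥ ((A ^ (j:ℕ)) *ᵥ (fun _ => (1:ℝ)))) v := by
          simp [Matrix.mul_apply, Matrix.mulVec, dotProduct, hU, powCols]
        rw [e0, Matrix.mulVec_mulVec, ← pow_succ']
      have e2 : (U * S) v j = (U *ᵥ s j) v := rfl
      rw [e1, e2, hs1]
    have hBW : B * Wm = Wm * S := by
      funext w j
      have e1 : (B * Wm) w j = ((B ^ ((j:ℕ)+1)) *ᵥ (fun _ => (1:ℝ))) w := by
        have e0 : (B * Wm) w j = (B *ᵥ ((B ^ (j:ℕ)) *ᵥ (fun _ => (1:ℝ)))) w := by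
          simp [Matrix.mul_apply, Matrix.mulVec, dotProduct, hWm, powCols]
        rw [e0, Matrix.mulVec_mulVec, ← pow_succ']
      have e2 : (Wm * S) w j = (Wm *ᵥ s j) w := rfl
      rw [e1, e2, hs2]
    refine ⟨U * N * Wmᵀ, ?_, ?_, ?_⟩
    · -- A * X = X * B
      have hMS : M * S = Uᵀ * A * U := by
        rw [hM, Matrix.mul_assoc, ← hAU, ← Matrix.mul_assoc]
      have hMSsymm : (M * S)ᵀ = M * S := by
        rw [hMS, Matrix.transpose_mul, Matrix.transpose_mul, Matrix.transpose_transpose, hAT,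
          Matrix.mul_assoc]
      have hSTM : Sᵀ * M = M * S := by
        rw [← hMT, ← Matrix.transpose_mul, hMSsymm, hMT]
      have t1 : M * (S * N) * M = M * S := by
        calc M * (S * N) * M = (M * S) * (N * M) := by simp only [Matrix.mul_assoc]
          _ = (Uᵀ * A * U) * (N * M) := by rw [hMS]
          _ = (Uᵀ * A) * (U * (N * M)) := by simp only [Matrix.mul_assoc]
          _ = (Uᵀ * A) * U := by rw [F1]
          _ = M * S := hMS.symm
      have t2 : M * (N * Sᵀ) * M = M * S := by
        calc M * (N * Sᵀ) * M = (M * N) * (Sᵀ * M) := by simp only [Matrix.mul_assoc]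
          _ = (M * N) * (M * S) := by rw [hSTM]
          _ = (M * N * M) * S := by simp only [Matrix.mul_assoc]
          _ = M * S := by rw [hMNM]
      set C : Matrix (Fin (n+1)) (Fin (n+1)) ℝ := S * N - N * Sᵀ with hC
      have hMCM : M * C * M = 0 := by
        rw [hC, Matrix.mul_sub, Matrix.sub_mul, t1, t2, sub_self]
      have hZ : U * C * Wmᵀ = 0 := by
        apply eq_zero_of_trace_transpose_mul_self
        have htr : ((U * C * Wmᵀ)ᵀ * (U * C * Wmᵀ)) = Wm * (Cᵀ * (M * (C * Wmᵀ))) := by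
          rw [hM]
          simp only [Matrix.transpose_mul, Matrix.transpose_transpose, Matrix.mul_assoc]
        rw [htr, Matrix.trace_mul_comm]
        have hcollapse : (Cᵀ * (M * (C * Wmᵀ))) * Wm = Cᵀ * (M * C * M) := by
          rw [hMW]
          simp only [Matrix.mul_assoc]
        rw [hcollapse, hMCM, Matrix.mul_zero, Matrix.trace_zero]
      have hZ0 : U * (S * N) * Wmᵀ = U * (N * Sᵀ) * Wmᵀ := by
        have h9 : U * (S * N - N * Sᵀ) * Wmᵀ = 0 := hZ
        rw [Matrix.mul_sub, Matrix.sub_mul, sub_eq_zero] at h9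
        exact h9
      have hWB : Wmᵀ * B = Sᵀ * Wmᵀ := by
        have h10 := congrArg Matrix.transpose hBW
        rw [Matrix.transpose_mul, Matrix.transpose_mul, hBT] at h10
        exact h10
      calc A * (U * N * Wmᵀ) = ((A * U) * N) * Wmᵀ := by simp only [Matrix.mul_assoc]
        _ = ((U * S) * N) * Wmᵀ := by rw [hAU]
        _ = U * (S * N) * Wmᵀ := by simp only [Matrix.mul_assoc]
        _ = U * (N * Sᵀ) * Wmᵀ := hZ0
        _ = (U * N) * (Sᵀ * Wmᵀ) := by simp only [Matrix.mul_assoc]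
        _ = (U * N) * (Wmᵀ * B) := by rw [hWB]
        _ = (U * N * Wmᵀ) * B := by simp only [Matrix.mul_assoc]
    · -- X *ᵥ 1 = 1
      have hWt1 : Wmᵀ *ᵥ (fun _ => (1:ℝ)) = M *ᵥ Pi.single 0 1 := by
        rw [hWm, powCols_transpose_mulVec_one, ← hWm, ← hMW]
      calc (U * N * Wmᵀ) *ᵥ (fun _ => (1:ℝ))
          = (U * N) *ᵥ (Wmᵀ *ᵥ (fun _ => (1:ℝ))) := by rw [← Matrix.mulVec_mulVec]
        _ = (U * N) *ᵥ (M *ᵥ Pi.single 0 1) := by rw [hWt1]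
        _ = ((U * N) * M) *ᵥ Pi.single 0 1 := by rw [Matrix.mulVec_mulVec]
        _ = U *ᵥ Pi.single 0 1 := by rw [Matrix.mul_assoc, F1]
        _ = (fun _ => (1:ℝ)) := by rw [hU, powCols_mulVec_single]; simp
    · -- 1 ᵥ* X = 1
      have hUt1 : Uᵀ *ᵥ (fun _ => (1:ℝ)) = M *ᵥ Pi.single 0 1 := by
        rw [hU, powCols_transpose_mulVec_one, ← hU, ← hM]
      have htr : (fun _ => (1:ℝ)) ᵥ* (U * N * Wmᵀ) = (U * N * Wmᵀ)ᵀ *ᵥ (fun _ => (1:ℝ)) :=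
        (Matrix.mulVec_transpose _ _).symm
      rw [htr, Matrix.transpose_mul, Matrix.transpose_mul, Matrix.transpose_transpose, hNT]
      calc (Wm * (N * Uᵀ)) *ᵥ (fun _ => (1:ℝ))
          = (Wm * N) *ᵥ (Uᵀ *ᵥ (fun _ => (1:ℝ))) := by
            rw [← Matrix.mul_assoc, ← Matrix.mulVec_mulVec]
        _ = ((Wm * N) * M) *ᵥ Pi.single 0 1 := by rw [hUt1, Matrix.mulVec_mulVec]
        _ = Wm *ᵥ Pi.single 0 1 := by rw [Matrix.mul_assoc, F2]
        _ = (fun _ => (1:ℝ)) := by rw [hWm, powCols_mulVec_single]; simp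
  · rintro ⟨X, hAX, hX1, h1X⟩ ℓ
    have hpow : ∀ k : ℕ, A ^ k * X = X * B ^ k := by
      intro k
      induction k with
      | zero => simp
      | succ k ih =>
        calc A ^ (k+1) * X = A ^ k * (A * X) := by rw [pow_succ, Matrix.mul_assoc]
        _ = A ^ k * (X * B) := by rw [hAX]
        _ = (A ^ k * X) * B := by rw [Matrix.mul_assoc]
        _ = X * B ^ k * B := by rw [ih]
        _ = X * B ^ (k+1) := by rw [pow_succ, Matrix.mul_assoc]
    calc (fun _ => (1:ℝ)) ⬝ᵥ (A ^ ℓ *ᵥ (fun _ => 1))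
        = (fun _ => (1:ℝ)) ⬝ᵥ (A ^ ℓ *ᵥ (X *ᵥ (fun _ => 1))) := by rw [hX1]
      _ = (fun _ => (1:ℝ)) ⬝ᵥ ((A ^ ℓ * X) *ᵥ (fun _ => 1)) := by rw [Matrix.mulVec_mulVec]
      _ = (fun _ => (1:ℝ)) ⬝ᵥ ((X * B ^ ℓ) *ᵥ (fun _ => 1)) := by rw [hpow]
      _ = (fun _ => (1:ℝ)) ⬝ᵥ (X *ᵥ (B ^ ℓ *ᵥ (fun _ => 1))) := by rw [Matrix.mulVec_mulVec]
      _ = ((fun _ => (1:ℝ)) ᵥ* X) ⬝ᵥ (B ^ ℓ *ᵥ (fun _ => 1)) := by rw [Matrix.dotProduct_mulVec]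
      _ = (fun _ => (1:ℝ)) ⬝ᵥ (B ^ ℓ *ᵥ (fun _ => 1)) := by rw [h1X]
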